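/- Let X, Y, Z be uniform random variables with support sizes a, b, c respectively where a ≠ b, and let U be a binary non-uniform random variable. Suppose there exist X̃, Ỹ with X̃ uniform of support size a, Ỹ uniform of support size b, X̃, Ỹ, U mutually independent, U a.s. a function of Z, Z a.s. a function of (X̃, Ỹ, U), and every single-mass indicator of Z is a single-mass indicator of (X̃,U) or of (Ỹ,U). Then c = a + b and U ∼ Bern(a/(a+b)) up to relabeling. -/

import Mathlib

open MeasureTheory ProbabilityTheory
open scoped ENNReal

/-- `X` is uniformly distributed over a support of size `k`. -/
def UnifOn {Ω : Type} [MeasurableSpace Ω] (μ : Measure Ω) (X : Ω → ℕ) (k : ℕ) : Prop :=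
  ∃ S : Finset ℕ, S.card = k ∧
    ∀ x : ℕ, μ (X ⁻¹' {x}) = if x ∈ S then ((k : ℝ≥0∞))⁻¹ else 0

/-- Key step: if the atom `Z = z` is (a.e.) contained in `{U = u}`, has positive measure,
and coincides a.e. with `{W = x ∧ U = u'}` for a uniform `W` independent of `U`, then
`μ (Z⁻¹' {z}) = k⁻¹ * μ (U⁻¹' {u})`. -/
lemma atom_measure {Ω : Type} [MeasurableSpace Ω] (μ : Measure Ω) [IsProbabilityMeasure μ]
    (W U Z : Ω → ℕ) (k : ℕ) (hWu : UnifOn μ W k) (hind : IndepFun W U μ)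
    (z u u' x : ℕ)
    (hsub : μ (Z ⁻¹' {z} \ U ⁻¹' {u}) = 0)
    (hzne : μ (Z ⁻¹' {z}) ≠ 0)
    (hD : μ {ω | (Z ω = z) ≠ (W ω = x ∧ U ω = u')} = 0) :
    μ (Z ⁻¹' {z}) = (k : ℝ≥0∞)⁻¹ * μ (U ⁻¹' {u}) := by
  set E : Set Ω := W ⁻¹' {x} ∩ U ⁻¹' {u'} with hE
  have h1 : μ (Z ⁻¹' {z} \ E) = 0 := by
    refine measure_mono_null ?_ hD
    intro ω hω
    simp only [Set.mem_diff, Set.mem_preimage, Set.mem_inter_iff, Set.mem_singleton_iff, hE] at hω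
    simp only [Set.mem_setOf_eq, ne_eq, eq_iff_iff]
    tauto
  have h2 : μ (E \ Z ⁻¹' {z}) = 0 := by
    refine measure_mono_null ?_ hD
    intro ω hω
    simp only [Set.mem_diff, Set.mem_preimage, Set.mem_inter_iff, Set.mem_singleton_iff, hE] at hω
    simp only [Set.mem_setOf_eq, ne_eq, eq_iff_iff]
    tauto
  have hEZ : μ E = μ (Z ⁻¹' {z}) :=
    (MeasureTheory.measure_congr (μ := μ) (MeasureTheory.ae_eq_set.2 ⟨h1, h2⟩)).symm
  -- show u' = u
  have huu : u' = u := by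
    by_contra hne
    have hcover : E \ U ⁻¹' {u} ⊆ (E \ Z ⁻¹' {z}) ∪ (Z ⁻¹' {z} \ U ⁻¹' {u}) := by
      intro ω hω
      by_cases h : ω ∈ Z ⁻¹' {z}
      · exact Or.inr ⟨h, hω.2⟩
      · exact Or.inl ⟨hω.1, h⟩
    have hEsub : μ (E \ U ⁻¹' {u}) = 0 :=
      measure_mono_null hcover (le_antisymm (le_trans (measure_union_le _ _)
        (by rw [h2, hsub]; simp)) bot_le)
    have hEq : E \ U ⁻¹' {u} = E := by
      ext ω
      simp only [Set.mem_diff, Set.mem_preimage, Set.mem_singleton_iff, hE,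
        Set.mem_inter_iff, and_iff_left_iff_imp]
      rintro ⟨_, h2'⟩ h3
      exact hne (h2'.symm.trans h3)
    rw [hEq, hEZ] at hEsub
    exact hzne hEsub
  subst huu
  have hmul : μ E = μ (W ⁻¹' {x}) * μ (U ⁻¹' {u'}) :=
    hind.measure_inter_preimage_eq_mul _ _ (measurableSet_singleton x)
      (measurableSet_singleton _)
  obtain ⟨S, hScard, hSval⟩ := hWu
  have hWx : μ (W ⁻¹' {x}) = (k : ℝ≥0∞)⁻¹ := by
    have hne0 : μ (W ⁻¹' {x}) ≠ 0 := by
      intro h0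
      rw [h0, zero_mul] at hmul
      exact hzne (hEZ ▸ hmul)
    rw [hSval x] at hne0 ⊢
    split at hne0
    · simp [*]
    · simp at hne0
  rw [← hEZ, hmul, hWx]

/-- Final arithmetic: from `c⁻¹ = a⁻¹ p₁`, `c⁻¹ = b⁻¹ p₂`, `p₁ + p₂ = 1` we get
`c = a + b` and `p₁ = a / (a + b)`. -/
lemma final_arith (a b c : ℕ) (ha : 1 ≤ a) (hb : 1 ≤ b) (p₁ p₂ : ℝ≥0∞)
    (hp1t : p₁ ≠ ⊤) (hp2t : p₂ ≠ ⊤) (hsum : p₁ + p₂ = 1)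
    (h1 : (c : ℝ≥0∞)⁻¹ = (a : ℝ≥0∞)⁻¹ * p₁)
    (h2 : (c : ℝ≥0∞)⁻¹ = (b : ℝ≥0∞)⁻¹ * p₂) :
    c = a + b ∧ p₁ = (a : ℝ≥0∞) / ((a : ℝ≥0∞) + (b : ℝ≥0∞)) := by
  have ha0 : (a : ℝ≥0∞) ≠ 0 := Nat.cast_ne_zero.2 (by omega)
  have hb0 : (b : ℝ≥0∞) ≠ 0 := Nat.cast_ne_zero.2 (by omega)
  have hc0 : (c : ℝ≥0∞) ≠ 0 := by
    refine ENNReal.inv_ne_top.mp ?_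
    rw [h1]
    exact ENNReal.mul_ne_top (by simp [ha0]) hp1t
  have hp1c : p₁ = (a : ℝ≥0∞) * (c : ℝ≥0∞)⁻¹ := by
    rw [h1, ← mul_assoc, ENNReal.mul_inv_cancel ha0 (ENNReal.natCast_ne_top a), one_mul]
  have hp2c : p₂ = (b : ℝ≥0∞) * (c : ℝ≥0∞)⁻¹ := by
    rw [h2, ← mul_assoc, ENNReal.mul_inv_cancel hb0 (ENNReal.natCast_ne_top b), one_mul]
  have h3 : ((a : ℝ≥0∞) + b) * (c : ℝ≥0∞)⁻¹ = 1 := by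
    rw [add_mul, ← hp1c, ← hp2c, hsum]
  have hcab : ((a : ℝ≥0∞) + b) = c := by
    calc (a : ℝ≥0∞) + b = ((a : ℝ≥0∞) + b) * ((c : ℝ≥0∞)⁻¹ * c) := by
          rw [ENNReal.inv_mul_cancel hc0 (ENNReal.natCast_ne_top c), mul_one]
      _ = (((a : ℝ≥0∞) + b) * (c : ℝ≥0∞)⁻¹) * c := by ring
      _ = c := by rw [h3, one_mul]
  constructor
  · exact_mod_cast hcab.symm
  · rw [hp1c, ← hcab, div_eq_mul_inv]

theorem stmt7 {Ω : Type} [MeasurableSpace Ω] (μ : Measure Ω) [IsProbabilityMeasure μ]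
    (X Y Z U Xt Yt : Ω → ℕ)
    (hZ : Measurable Z) (hU : Measurable U) (hXt : Measurable Xt) (hYt : Measurable Yt)
    (a b c : ℕ) (ha : 1 ≤ a) (hb : 1 ≤ b) (hab : a ≠ b)
    (hXu : UnifOn μ X a) (hYu : UnifOn μ Y b) (hZu : UnifOn μ Z c)
    (hUcard : {u | μ (U ⁻¹' {u}) ≠ 0}.encard = 2)
    (hUnonunif : ∃ u₁ u₂ : ℕ, μ (U ⁻¹' {u₁}) ≠ 0 ∧ μ (U ⁻¹' {u₂}) ≠ 0 ∧
      μ (U ⁻¹' {u₁}) ≠ μ (U ⁻¹' {u₂}))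
    (hXtu : UnifOn μ Xt a) (hYtu : UnifOn μ Yt b)
    (hind1 : IndepFun Xt Yt μ)
    (hind2 : IndepFun (fun ω => (Xt ω, Yt ω)) U μ)
    (hUZ : ∃ f : ℕ → ℕ, U =ᵐ[μ] fun ω => f (Z ω))
    (hZfun : ∃ g : ℕ × ℕ × ℕ → ℕ, Z =ᵐ[μ] fun ω => g (Xt ω, Yt ω, U ω))
    (hsmi : ∀ z : ℕ, μ (Z ⁻¹' {z}) ≠ 0 →
      (∃ x u, μ {ω | Xt ω = x ∧ U ω = u} ≠ 0 ∧
          μ {ω | (Z ω = z) ≠ (Xt ω = x ∧ U ω = u)} = 0) ∨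
      (∃ y u, μ {ω | Yt ω = y ∧ U ω = u} ≠ 0 ∧
          μ {ω | (Z ω = z) ≠ (Yt ω = y ∧ U ω = u)} = 0)) :
    c = a + b ∧ ∃ u₀ : ℕ, μ (U ⁻¹' {u₀}) = (a : ℝ≥0∞) / ((a : ℝ≥0∞) + (b : ℝ≥0∞)) := by
  obtain ⟨u₁, u₂, hq1, hq2, hqne⟩ := hUnonunif
  obtain ⟨f, hUZf⟩ := hUZ
  have hu12 : u₁ ≠ u₂ := fun h => hqne (by rw [h])
  have hN : μ {ω | ¬ U ω = f (Z ω)} = 0 := ae_iff.1 hUZf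
  -- the support of U is exactly {u₁, u₂}
  have hSsupp : {u | μ (U ⁻¹' {u}) ≠ 0} = {u₁, u₂} := by
    refine (Set.Finite.eq_of_subset_of_encard_le'
      (Set.finite_of_encard_eq_coe (k := 2) (by exact_mod_cast hUcard)) ?_ ?_).symm
    · intro u hu
      rcases hu with rfl | hu
      · exact hq1
      · rw [Set.mem_singleton_iff] at hu; subst hu; exact hq2
    · rw [hUcard, Set.encard_pair hu12]
  -- total probability
  have htot : ∑' u : ℕ, μ (U ⁻¹' {u}) = 1 := by
    have hdis : Pairwise (Function.onFun Disjoint fun u : ℕ => U ⁻¹' {u}) :=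
      fun i j hij => Disjoint.preimage U (by simp [hij])
    have hun : (⋃ u : ℕ, U ⁻¹' {u}) = Set.univ := by ext ω; simp
    rw [← measure_iUnion hdis fun u => hU (measurableSet_singleton u), hun, measure_univ]
  have hsum : μ (U ⁻¹' {u₁}) + μ (U ⁻¹' {u₂}) = 1 := by
    have h0 : ∀ u ∉ ({u₁, u₂} : Finset ℕ), μ (U ⁻¹' {u}) = 0 := by
      intro u hu
      by_contra h
      have hmem : u ∈ {u | μ (U ⁻¹' {u}) ≠ 0} := h
      rw [hSsupp] at hmem
      simp only [Finset.mem_insert, Finset.mem_singleton] at hu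
      rcases hmem with rfl | hmem
      · exact hu (Or.inl rfl)
      · rw [Set.mem_singleton_iff] at hmem; exact hu (Or.inr hmem)
    rw [← htot, tsum_eq_sum h0, Finset.sum_pair hu12]
  -- each atom of U gives an equation
  have main : ∀ u : ℕ, μ (U ⁻¹' {u}) ≠ 0 →
      (c : ℝ≥0∞)⁻¹ = (a : ℝ≥0∞)⁻¹ * μ (U ⁻¹' {u}) ∨
      (c : ℝ≥0∞)⁻¹ = (b : ℝ≥0∞)⁻¹ * μ (U ⁻¹' {u}) := by
    intro u hu
    have hz : ∃ z : ℕ, f z = u ∧ μ (Z ⁻¹' {z}) ≠ 0 := by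
      by_contra h
      push_neg at h
      apply hu
      have hcov : U ⁻¹' {u} ⊆
          {ω | ¬ U ω = f (Z ω)} ∪ ⋃ z ∈ (f ⁻¹' {u} : Set ℕ), Z ⁻¹' {z} := by
        intro ω hω
        rw [Set.mem_preimage, Set.mem_singleton_iff] at hω
        by_cases hfz : f (Z ω) = u
        · exact Or.inr (Set.mem_biUnion hfz rfl)
        · exact Or.inl (fun he => hfz (he.symm.trans hω))
      have hb0 : μ (⋃ z ∈ (f ⁻¹' {u} : Set ℕ), Z ⁻¹' {z}) = 0 :=
        (measure_biUnion_null_iff (Set.to_countable _)).2 fun z hz' => h z hz'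
      refine measure_mono_null hcov (le_antisymm (le_trans (measure_union_le _ _) ?_) bot_le)
      rw [hN, hb0, add_zero]
    obtain ⟨z, hfz, hzne⟩ := hz
    have hsub : μ (Z ⁻¹' {z} \ U ⁻¹' {u}) = 0 := by
      refine measure_mono_null ?_ hN
      rintro ω ⟨h1, h2⟩
      rw [Set.mem_preimage, Set.mem_singleton_iff] at h1 h2
      intro he
      exact h2 (he.trans (by rw [h1, hfz]))
    obtain ⟨Sz, hSzcard, hSzval⟩ := hZu
    have hzc : μ (Z ⁻¹' {z}) = (c : ℝ≥0∞)⁻¹ := by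
      by_cases hzS : z ∈ Sz
      · rw [hSzval z, if_pos hzS]
      · exact absurd (by rw [hSzval z, if_neg hzS]) hzne
    rcases hsmi z hzne with ⟨x, u', _, hx2⟩ | ⟨y, u', _, hy2⟩
    · left
      rw [← hzc]
      exact atom_measure μ Xt U Z a hXtu (hind2.comp measurable_fst measurable_id)
        z u u' x hsub hzne hx2
    · right
      rw [← hzc]
      exact atom_measure μ Yt U Z b hYtu (hind2.comp measurable_snd measurable_id)
        z u u' y hsub hzne hy2
  have hp1t : μ (U ⁻¹' {u₁}) ≠ ⊤ := measure_ne_top μ _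
  have hp2t : μ (U ⁻¹' {u₂}) ≠ ⊤ := measure_ne_top μ _
  have hcancel : ∀ k : ℕ, 1 ≤ k → ∀ p q : ℝ≥0∞,
      (k : ℝ≥0∞)⁻¹ * p = (k : ℝ≥0∞)⁻¹ * q → p = q := by
    intro k hk p q h
    have hk0 : (k : ℝ≥0∞) ≠ 0 := Nat.cast_ne_zero.2 (by omega)
    exact (ENNReal.mul_right_inj (by simp [ENNReal.natCast_ne_top k]) (by simp [hk0])).mp h
  rcases main u₁ hq1 with h1 | h1 <;> rcases main u₂ hq2 with h2 | h2
  · exact absurd (hcancel a ha _ _ (h1.symm.trans h2)) hqne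
  · obtain ⟨hc, hp⟩ := final_arith a b c ha hb _ _ hp1t hp2t hsum h1 h2
    exact ⟨hc, u₁, hp⟩
  · obtain ⟨hc, hp⟩ := final_arith a b c ha hb _ _ hp2t hp1t (by rw [add_comm]; exact hsum) h2 h1
    exact ⟨hc, u₂, hp⟩
  · exact absurd (hcancel b hb _ _ (h1.symm.trans h2)) hqne
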